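/- Let ϑ be a primitive compatible random substitution of constant length ℓ and let v be a legal word of length ℓ with v ∉ ϑ(𝒜). If gcd(p, ℓ) = 1, then no element of X_ϑ of period p contains v as a subword. -/

import Mathlib

open List

variable {A : Type*}

/-- Extension of a random substitution to words, by concatenation. -/
def substWord (θ : A → Set (List A)) : List A → Set (List A)
  | [] => {[]}
  | a :: u => {w | ∃ x ∈ θ a, ∃ y ∈ substWord θ u, w = x ++ y}

/-- The set of realisations of `θ^k` on a word. -/
def substPowWord (θ : A → Set (List A)) : ℕ → List A → Set (List A)
  | 0, u => {u}
  | (k+1), u => ⋃ v ∈ substPowWord θ k u, substWord θ v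

/-- The power `θ^k` as a random substitution. -/
def powSub (θ : A → Set (List A)) (k : ℕ) : A → Set (List A) :=
  fun a => substPowWord θ k [a]

/-- `θ` is a (finite range) random substitution: every letter has a nonempty
finite set of realisations, all of which are nonempty words. -/
def RandomSubstitution (θ : A → Set (List A)) : Prop :=
  ∀ a : A, (θ a).Nonempty ∧ (θ a).Finite ∧ ∀ w ∈ θ a, w ≠ []

/-- A word is `θ`-legal if it is a subword of a realisation of some power of
`θ` on some letter. -/
def IsLegal (θ : A → Set (List A)) (u : List A) : Prop :=
  ∃ k : ℕ, ∃ a : A, ∃ w ∈ substPowWord θ k [a], u <:+: w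

/-- `θ` has disjoint images. -/
def HasDisjointImages (θ : A → Set (List A)) : Prop :=
  ∀ u v : List A, IsLegal θ u → IsLegal θ v →
    (substWord θ u ∩ substWord θ v).Nonempty → u = v

/-- `θ` has constant length `ℓ`. -/
def ConstantLength (θ : A → Set (List A)) (ℓ : ℕ) : Prop :=
  ∀ a : A, ∀ w ∈ θ a, w.length = ℓ

/-- `θ` is compatible: abelianisations of realisations are well defined. -/
def Compatible [DecidableEq A] (θ : A → Set (List A)) : Prop :=
  ∀ a : A, ∀ u ∈ θ a, ∀ v ∈ θ a, ∀ b : A, u.count b = v.count b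

/-- `θ` is primitive. -/
def Primitive (θ : A → Set (List A)) : Prop :=
  ∃ k : ℕ, ∀ a b : A, ∃ w ∈ substPowWord θ k [a], b ∈ w

/-- The finite subword of a bi-infinite sequence starting at `i`, of length `n`. -/
def extract (x : ℤ → A) (i : ℤ) (n : ℕ) : List A :=
  (List.range n).map fun j => x (i + j)

/-- The RS-subshift of `θ`: bi-infinite sequences all of whose subwords are legal. -/
def Subshift (θ : A → Set (List A)) : Set (ℤ → A) :=
  {x | ∀ i : ℤ, ∀ n : ℕ, IsLegal θ (extract x i n)}

/-- `x` is a realisation-wise image of `y` under `θ`: there is a decomposition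
of `x` into consecutive inflation words, with a cut at the origin, the `n`-th
of which is a realisation of `θ` on `y n`. -/
def SeqImage (θ : A → Set (List A)) (y x : ℤ → A) : Prop :=
  ∃ c : ℤ → ℤ, c 0 = 0 ∧ (∀ n : ℤ, c n < c (n + 1)) ∧
    ∀ n : ℤ, extract x (c n) (c (n + 1) - c n).toNat ∈ θ (y n)

/-- `θ` is globally uniquely recognisable. -/
def GloballyUniquelyRecognisable (θ : A → Set (List A)) : Prop :=
  ∀ x ∈ Subshift θ, ∃! y : ℤ → A, y ∈ Subshift θ ∧
    ∃ k : ℕ, (∃ w ∈ θ (y 0), k < w.length) ∧ SeqImage θ y (fun n => x (n - k))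

/-- `x` has period `p` (as a natural number, acting on indices in `ℤ`). -/
def HasPeriod (x : ℤ → A) (p : ℕ) : Prop :=
  ∀ n : ℤ, x (n + p) = x n

/-- `x` is shift-periodic. -/
def IsPeriodic (x : ℤ → A) : Prop :=
  ∃ p : ℕ, 0 < p ∧ HasPeriod x p

/-- `p` is the prime (least) period of `x`. -/
def PrimePeriod (x : ℤ → A) (p : ℕ) : Prop :=
  0 < p ∧ HasPeriod x p ∧ ∀ q : ℕ, 0 < q → HasPeriod x q → p ≤ q

/-- `u` is a periodic block for `x`: up to shift, `x` is the bi-infinite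
repetition of `u`. -/
def PeriodicBlock (u : List A) (x : ℤ → A) : Prop :=
  u ≠ [] ∧ ∃ i : ℤ, ∀ n : ℤ, extract x (i + n * u.length) u.length = u


section Helpers

variable {A : Type*}

lemma flatMap_single {α β : Type*} (l : List α) (f : α → β) :
    (l.flatMap fun a => [f a]) = l.map f := by
  induction l with
  | nil => rfl
  | cons a l ih => simp [List.flatMap_cons, ih]

lemma extract_length (x : ℤ → A) (i : ℤ) (n : ℕ) :
    (extract x i n).length = n := by
  simp [_root_.extract, flatMap_single]

lemma extract_get (x : ℤ → A) (i : ℤ) {n j : ℕ} (hj : j < n) :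
    (extract x i n)[j]'(by rw [extract_length]; exact hj) = x (i + j) := by
  simp [_root_.extract, flatMap_single]

lemma extract_drop_take (x : ℤ → A) (i : ℤ) (N d ℓ : ℕ) (h : d + ℓ ≤ N) :
    ((extract x i N).drop d).take ℓ = extract x (i + d) ℓ := by
  apply List.ext_getElem
  · simp only [List.length_take, List.length_drop, extract_length]; omega
  · intro j h1 h2
    have hjl : j < ℓ := by simpa [extract_length] using h2
    rw [List.getElem_take, List.getElem_drop]
    have hdj : d + j < N := by omega
    rw [extract_get x i hdj, extract_get x (i + d) hjl]
    congr 1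
    push_cast
    ring

lemma extract_one_period {x : ℤ → A} {p : ℕ} (hx : ∀ n : ℤ, x (n + p) = x n)
    (i : ℤ) (n : ℕ) : extract x (i + p) n = extract x i n := by
  apply List.ext_getElem
  · simp [extract_length]
  · intro j h1 h2
    have hjl : j < n := by simpa [extract_length] using h2
    rw [extract_get x (i + p) hjl, extract_get x i hjl]
    rw [show i + (p : ℤ) + j = (i + j) + p by ring, hx (i + j)]

lemma extract_shift_period {x : ℤ → A} {p : ℕ} (hx : ∀ n : ℤ, x (n + p) = x n)
    (i : ℤ) (n : ℕ) (k : ℕ) : extract x (i + k * p) n = extract x i n := by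
  induction k with
  | zero => simp
  | succ k ih =>
    rw [show i + ((k : ℕ) + 1 : ℕ) * (p : ℤ) = (i + k * p) + p by push_cast; ring,
      extract_one_period hx, ih]

lemma key_nt {p ℓ : ℕ} (hℓ : 0 < ℓ) (hcop : Nat.gcd p ℓ = 1) (s : ℕ) :
    ∃ k M, s + k * p = M * ℓ ∧ k * p + ℓ ≤ (p + 2) * ℓ := by
  haveI : NeZero ℓ := ⟨hℓ.ne'⟩
  have hu : IsUnit (p : ZMod ℓ) := (ZMod.isUnit_iff_coprime p ℓ).mpr hcop
  set c : ZMod ℓ := (-(s : ZMod ℓ)) * (p : ZMod ℓ)⁻¹ with hc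
  refine ⟨c.val, (s + c.val * p) / ℓ, ?_, ?_⟩
  · have hdvd : ℓ ∣ s + c.val * p := by
      rw [← ZMod.natCast_eq_zero_iff]
      push_cast
      rw [ZMod.natCast_val, ZMod.cast_id, hc]
      rw [mul_assoc, ZMod.inv_mul_of_unit _ hu]
      ring
    rw [Nat.div_mul_cancel hdvd]
  · have hk : c.val < ℓ := ZMod.val_lt c
    calc c.val * p + ℓ ≤ ℓ * p + ℓ :=
          Nat.add_le_add_right (Nat.mul_le_mul_right p (le_of_lt hk)) ℓ
      _ ≤ (p + 2) * ℓ := by nlinarith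

lemma substWord_block {θ : A → Set (List A)} {ℓ : ℕ} (hcl : ConstantLength θ ℓ)
    (hℓ : 0 < ℓ) :
    ∀ (y W : List A), W ∈ substWord θ y → ∀ m, (m + 1) * ℓ ≤ W.length →
      ∃ a, (W.drop (m * ℓ)).take ℓ ∈ θ a := by
  intro y
  induction y with
  | nil =>
    intro W hW m hm
    simp only [substWord, Set.mem_singleton_iff] at hW
    subst hW
    simp only [List.length_nil] at hm
    have : 0 < (m + 1) * ℓ := Nat.mul_pos (Nat.succ_pos m) hℓ
    omega
  | cons a u ih =>
    intro W hW m hm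
    simp only [substWord, Set.mem_setOf_eq] at hW
    obtain ⟨z, hz, y', hy', rfl⟩ := hW
    have hzlen : z.length = ℓ := hcl a z hz
    cases m with
    | zero =>
      refine ⟨a, ?_⟩
      rw [Nat.zero_mul, List.drop_zero, ← hzlen, List.take_left]
      exact hz
    | succ m =>
      have hdrop : (z ++ y').drop ((m + 1) * ℓ) = y'.drop (m * ℓ) := by
        rw [show (m + 1) * ℓ = z.length + m * ℓ by rw [hzlen]; ring]
        exact List.drop_length_add_append (m * ℓ)
      rw [hdrop]
      apply ih y' hy' m
      have hlen : (z ++ y').length = ℓ + y'.length := by simp [hzlen]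
      have he : (m + 1 + 1) * ℓ = (m + 1) * ℓ + ℓ := by ring
      omega

end Helpers

/-- for a primitive compatible constant-length-`ℓ` substitution, a
legal word of length `ℓ` which is not an inflation word cannot occur in any
`p`-periodic element when `gcd(p, ℓ) = 1`. -/
theorem coprime_period_no_non_inflation_word [DecidableEq A]
    (θ : A → Set (List A)) (hθ : RandomSubstitution θ)
    (hc : Compatible θ) (hprim : Primitive θ)
    (ℓ : ℕ) (hℓ : ConstantLength θ ℓ)
    (v : List A) (hv : IsLegal θ v) (hvlen : v.length = ℓ)
    (hvnot : ∀ a : A, v ∉ θ a)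
    (p : ℕ) (hp : 0 < p) (hcop : Nat.gcd p ℓ = 1) :
    ∀ x ∈ Subshift θ, HasPeriod x p → ¬ ∃ i : ℤ, extract x i ℓ = v := by
  rintro x hx hper ⟨i, hi⟩
  obtain ⟨w0, hw0⟩ := (hθ (x 0)).1
  have hw0ne := (hθ (x 0)).2.2 w0 hw0
  have hℓpos : 0 < ℓ := by
    have hlen := hℓ (x 0) w0 hw0
    rw [← hlen]
    exact List.length_pos_iff.mpr hw0ne
  set N := (p + 2) * ℓ with hN
  obtain ⟨k, a, W, hW, hinf⟩ := hx i N
  have hN3 : 2 ≤ N := by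
    calc 2 = 2 * 1 := rfl
      _ ≤ (p + 2) * ℓ := Nat.mul_le_mul (by omega) hℓpos
  cases k with
  | zero =>
    simp only [substPowWord, Set.mem_singleton_iff] at hW
    subst hW
    have hle := hinf.length_le
    rw [extract_length] at hle
    simp only [List.length_cons, List.length_nil] at hle
    omega
  | succ k =>
    simp only [substPowWord, Set.mem_iUnion, exists_prop] at hW
    obtain ⟨V, hV, hWV⟩ := hW
    obtain ⟨pre, suf, hWeq⟩ := hinf
    set s := pre.length with hs
    obtain ⟨kk, M, hM, hbd⟩ := key_nt hℓpos hcop s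
    set d := kk * p with hd
    have hdN : d + ℓ ≤ N := hbd
    have hWlen : W.length = s + N + suf.length := by
      rw [← hWeq]
      simp [extract_length]
      omega
    have hMW : (M + 1) * ℓ ≤ W.length := by
      have he : (M + 1) * ℓ = s + d + ℓ := by rw [add_mul, one_mul, ← hM]
      rw [he, hWlen]
      omega
    obtain ⟨b, hb⟩ := substWord_block hℓ hℓpos V W hWV M hMW
    have hblock : (W.drop (M * ℓ)).take ℓ = extract x (i + d) ℓ := by
      rw [← hM, ← hWeq, List.append_assoc,
        show s + d = pre.length + d from rfl, List.drop_length_add_append,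
        List.drop_append_of_le_length (by rw [extract_length]; omega),
        List.take_append_of_le_length
          (by rw [List.length_drop, extract_length]; omega),
        extract_drop_take x i N d ℓ hdN]
    have hv' : extract x (i + (d : ℤ)) ℓ = v := by
      have hcast : ((d : ℕ) : ℤ) = (kk : ℤ) * (p : ℤ) := by rw [hd]; push_cast; ring
      rw [hcast, extract_shift_period hper i ℓ kk, hi]
    rw [hblock, hv'] at hb
    exact hvnot b hb
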